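/- Let 0 < p < 1 be a real number and let a, t be real numbers with 0 < a ≤ t < 1. Then (t^{1−p} a^p + (1−t)^{1−p} (1−a)^p − 1)/(p−1) ≥ ((p+1)^{p+1}/(2 p^{p−1})) · (t−a)². -/

import Mathlib

open Real

private lemma rpow_shift1 {x : ℝ} (hx : 0 < x) (r s : ℝ) (h : r = s + 1) :
    x ^ r = x ^ s * x := by
  rw [h, Real.rpow_add hx, Real.rpow_one]

private lemma rpow_shift2 {x : ℝ} (hx : 0 < x) (r s : ℝ) (h : r = s + 1 + 1) :
    x ^ r = x ^ s * x * x := by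
  rw [h, Real.rpow_add hx, Real.rpow_add hx, Real.rpow_one]

private lemma hasDerivAt_term (c d r s x : ℝ) (h1 : 0 < c + x) (h2 : 0 < d - x) :
    HasDerivAt (fun e => (c + e) ^ r * (d - e) ^ s)
      (r * (c + x) ^ (r - 1) * (d - x) ^ s - s * (c + x) ^ r * (d - x) ^ (s - 1)) x := by
  have h1' : HasDerivAt (fun e : ℝ => c + e) 1 x := (hasDerivAt_id x).const_add c
  have h2' : HasDerivAt (fun e : ℝ => d - e) (-1) x := (hasDerivAt_id x).const_sub d
  have A : HasDerivAt (fun e : ℝ => (c + e) ^ r) (1 * r * (c + x) ^ (r - 1)) x :=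
    h1'.rpow_const (Or.inl h1.ne')
  have B : HasDerivAt (fun e : ℝ => (d - e) ^ s) ((-1) * s * (d - x) ^ (s - 1)) x :=
    h2'.rpow_const (Or.inl h2.ne')
  have := A.mul B
  exact this.congr_deriv (by ring)

/-- AM-GM claim: the key curvature bound. -/
private lemma claimC (p u v u' v' : ℝ) (hp : 0 < p) (hp1 : p < 1)
    (hu0 : 0 < u) (hu1 : u < 1) (hv0 : 0 < v) (hv1 : v < 1)
    (hu' : u' = 1 - u) (hv' : v' = 1 - v) :
    16 ≤ (u + v) ^ 2 * (u ^ (1 - p - 2) * v ^ (p - 2))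
        + (u' + v') ^ 2 * (u' ^ (1 - p - 2) * v' ^ (p - 2)) := by
  have hu'0 : 0 < u' := by rw [hu']; linarith
  have hv'0 : 0 < v' := by rw [hv']; linarith
  set X := u ^ (1 - p - 1) * v ^ (p - 1) with hX
  set Y := u' ^ (1 - p - 1) * v' ^ (p - 1) with hY
  have hXpos : 0 < X := mul_pos (rpow_pos_of_pos hu0 _) (rpow_pos_of_pos hv0 _)
  have hYpos : 0 < Y := mul_pos (rpow_pos_of_pos hu'0 _) (rpow_pos_of_pos hv'0 _)
  -- term1 ≥ 4X
  have t1 : 4 * X ≤ (u + v) ^ 2 * (u ^ (1 - p - 2) * v ^ (p - 2)) := by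
    have key : X = u * v * (u ^ (1 - p - 2) * v ^ (p - 2)) := by
      rw [hX, rpow_shift1 hu0 (1 - p - 1) (1 - p - 2) (by ring),
        rpow_shift1 hv0 (p - 1) (p - 2) (by ring)]
      ring
    rw [key]
    have huv : 4 * (u * v) ≤ (u + v) ^ 2 := by nlinarith [sq_nonneg (u - v)]
    calc 4 * (u * v * (u ^ (1 - p - 2) * v ^ (p - 2)))
        = 4 * (u * v) * (u ^ (1 - p - 2) * v ^ (p - 2)) := by ring
      _ ≤ (u + v) ^ 2 * (u ^ (1 - p - 2) * v ^ (p - 2)) :=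
        mul_le_mul_of_nonneg_right huv (by positivity)
  have t2 : 4 * Y ≤ (u' + v') ^ 2 * (u' ^ (1 - p - 2) * v' ^ (p - 2)) := by
    have key : Y = u' * v' * (u' ^ (1 - p - 2) * v' ^ (p - 2)) := by
      rw [hY, rpow_shift1 hu'0 (1 - p - 1) (1 - p - 2) (by ring),
        rpow_shift1 hv'0 (p - 1) (p - 2) (by ring)]
      ring
    rw [key]
    have huv : 4 * (u' * v') ≤ (u' + v') ^ 2 := by nlinarith [sq_nonneg (u' - v')]
    calc 4 * (u' * v' * (u' ^ (1 - p - 2) * v' ^ (p - 2)))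
        = 4 * (u' * v') * (u' ^ (1 - p - 2) * v' ^ (p - 2)) := by ring
      _ ≤ (u' + v') ^ 2 * (u' ^ (1 - p - 2) * v' ^ (p - 2)) :=
        mul_le_mul_of_nonneg_right huv (by positivity)
  -- X * Y ≥ 4
  have hXY : 4 ≤ X * Y := by
    have e1 : X * Y = (u * u') ^ (1 - p - 1) * (v * v') ^ (p - 1) := by
      rw [Real.mul_rpow hu0.le hu'0.le, Real.mul_rpow hv0.le hv'0.le, hX, hY]
      ring
    have b1 : u * u' ≤ 1 / 4 := by rw [hu']; nlinarith [sq_nonneg (u - 1 / 2)]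
    have b2 : v * v' ≤ 1 / 4 := by rw [hv']; nlinarith [sq_nonneg (v - 1 / 2)]
    have c1 : ((1 : ℝ) / 4) ^ (1 - p - 1) ≤ (u * u') ^ (1 - p - 1) :=
      Real.rpow_le_rpow_of_nonpos (by positivity) b1 (by linarith)
    have c2 : ((1 : ℝ) / 4) ^ (p - 1) ≤ (v * v') ^ (p - 1) :=
      Real.rpow_le_rpow_of_nonpos (by positivity) b2 (by linarith)
    have d0 : ((1 : ℝ) / 4) ^ (1 - p - 1) * ((1 : ℝ) / 4) ^ (p - 1) = 4 := by
      rw [← Real.rpow_add (by norm_num : (0:ℝ) < 1/4)]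
      rw [show (1 - p - 1) + (p - 1) = -1 by ring]
      rw [Real.rpow_neg_one]
      norm_num
    calc (4 : ℝ) = ((1 : ℝ) / 4) ^ (1 - p - 1) * ((1 : ℝ) / 4) ^ (p - 1) := d0.symm
      _ ≤ (u * u') ^ (1 - p - 1) * (v * v') ^ (p - 1) :=
        mul_le_mul c1 c2 (by positivity) (by positivity)
      _ = X * Y := e1.symm
  have hsum : 4 ≤ X + Y := by nlinarith [sq_nonneg (X - Y), mul_pos hXpos hYpos]
  linarith

set_option maxHeartbeats 2000000 in
theorem stmt_5 (p : ℝ) (hp0 : 0 < p) (hp1 : p < 1) (a t : ℝ) (ha : 0 < a) (hat : a ≤ t)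
    (ht : t < 1) :
    (t ^ (1 - p) * a ^ p + (1 - t) ^ (1 - p) * (1 - a) ^ p - 1) / (p - 1) ≥
      ((p + 1) ^ (p + 1) / (2 * p ^ (p - 1))) * (t - a) ^ 2 := by
  have ht0 : 0 < t := lt_of_lt_of_le ha hat
  have ha1 : a < 1 := lt_of_le_of_lt hat ht
  set m : ℝ := (a + t) / 2 with hm
  set E : ℝ := (t - a) / 2 with hE
  have hE0 : 0 ≤ E := by rw [hE]; linarith
  have hm0 : 0 < m := by rw [hm]; linarith
  have hm1 : m < 1 := by rw [hm]; linarith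
  have hmE1 : m + E = t := by rw [hm, hE]; ring
  have hmE2 : m - E = a := by rw [hm, hE]; ring
  have hmE3 : 1 - m - E = 1 - t := by rw [hm, hE]; ring
  have hmE4 : 1 - m + E = 1 - a := by rw [hm, hE]; ring
  -- basic positivity on the interval
  have hb : ∀ x ∈ Set.Icc (0:ℝ) E, 0 < m + x ∧ m + x < 1 ∧ 0 < m - x ∧ m - x < 1 ∧
      0 < 1 - m - x ∧ 0 < 1 - m + x ∧ 1 - m + x < 1 := by
    intro x hx
    obtain ⟨hx0, hxE⟩ := hx
    constructor; · linarith
    constructor; · nlinarith [hmE1, ht]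
    constructor; · nlinarith [hmE2, ha]
    constructor; · linarith
    constructor; · nlinarith [hmE3, ht]
    constructor; · linarith
    · nlinarith [hmE4, ha]
  -- the function W and its derivative pieces
  set W : ℝ → ℝ := fun e => 1 - ((m + e) ^ (1-p) * (m - e) ^ p
      + (1 - m + e) ^ p * (1 - m - e) ^ (1-p)) - 8 * (p * (1-p)) * e ^ 2 with hWdef
  set V : ℝ → ℝ := fun e => -((1-p) * ((m + e) ^ (1-p-1) * (m - e) ^ p)
        - p * ((m + e) ^ (1-p) * (m - e) ^ (p-1))
      + (p * ((1 - m + e) ^ (p-1) * (1 - m - e) ^ (1-p))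
        - (1-p) * ((1 - m + e) ^ p * (1 - m - e) ^ (1-p-1))))
      - 16 * (p * (1-p)) * e with hVdef
  have hq0 : 0 < 1 - p := by linarith
  have hpq : 0 < p * (1 - p) := mul_pos hp0 hq0
  -- derivative of W is V
  have hWderiv : ∀ x ∈ Set.Icc (0:ℝ) E, HasDerivAt W (V x) x := by
    intro x hx
    obtain ⟨h1, h2, h3, h4, h5, h6, h7⟩ := hb x hx
    have T1 := hasDerivAt_term m m (1-p) p x h1 h3
    have T2 := hasDerivAt_term (1-m) (1-m) p (1-p) x h6 h5
    have hP : HasDerivAt (fun e => (m + e) ^ (1-p) * (m - e) ^ p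
        + (1 - m + e) ^ p * (1 - m - e) ^ (1-p))
        (((1-p) * (m + x) ^ (1-p-1) * (m - x) ^ p - p * (m + x) ^ (1-p) * (m - x) ^ (p-1))
          + (p * (1 - m + x) ^ (p-1) * (1 - m - x) ^ (1-p)
            - (1-p) * (1 - m + x) ^ p * (1 - m - x) ^ (1-p-1))) x := T1.add T2
    have hsq : HasDerivAt (fun e : ℝ => 8 * (p * (1-p)) * e ^ 2)
        (8 * (p * (1-p)) * ((2:ℕ) * x ^ (2-1))) x := (hasDerivAt_pow 2 x).const_mul _
    have := (hP.const_sub 1).sub hsq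
    refine this.congr_deriv ?_
    rw [hVdef]
    push_cast
    ring
  -- derivative of V is nonnegative
  have hVderiv : ∀ x ∈ Set.Icc (0:ℝ) E, HasDerivAt V
      (-(((1-p) * ((1-p-1) * (m + x) ^ (1-p-1-1) * (m - x) ^ p
            - p * (m + x) ^ (1-p-1) * (m - x) ^ (p-1))
          - p * ((1-p) * (m + x) ^ (1-p-1) * (m - x) ^ (p-1)
            - (p-1) * (m + x) ^ (1-p) * (m - x) ^ (p-1-1)))
        + (p * ((p-1) * (1 - m + x) ^ (p-1-1) * (1 - m - x) ^ (1-p)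
            - (1-p) * (1 - m + x) ^ (p-1) * (1 - m - x) ^ (1-p-1))
          - (1-p) * (p * (1 - m + x) ^ (p-1) * (1 - m - x) ^ (1-p-1)
            - (1-p-1) * (1 - m + x) ^ p * (1 - m - x) ^ (1-p-1-1))))
      - 16 * (p * (1-p)) * 1) x := by
    intro x hx
    obtain ⟨h1, h2, h3, h4, h5, h6, h7⟩ := hb x hx
    have A1 := (hasDerivAt_term m m (1-p-1) p x h1 h3).const_mul (1-p)
    have A2 := (hasDerivAt_term m m (1-p) (p-1) x h1 h3).const_mul p
    have B1 := (hasDerivAt_term (1-m) (1-m) (p-1) (1-p) x h6 h5).const_mul p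
    have B2 := (hasDerivAt_term (1-m) (1-m) p (1-p-1) x h6 h5).const_mul (1-p)
    have hlin : HasDerivAt (fun e : ℝ => 16 * (p * (1-p)) * e) (16 * (p * (1-p)) * 1) x :=
      (hasDerivAt_id x).const_mul _
    exact (((A1.sub A2).add (B1.sub B2)).neg).sub hlin
  have hVderiv_nonneg : ∀ x ∈ Set.Icc (0:ℝ) E,
      0 ≤ (-(((1-p) * ((1-p-1) * (m + x) ^ (1-p-1-1) * (m - x) ^ p
            - p * (m + x) ^ (1-p-1) * (m - x) ^ (p-1))
          - p * ((1-p) * (m + x) ^ (1-p-1) * (m - x) ^ (p-1)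
            - (p-1) * (m + x) ^ (1-p) * (m - x) ^ (p-1-1)))
        + (p * ((p-1) * (1 - m + x) ^ (p-1-1) * (1 - m - x) ^ (1-p)
            - (1-p) * (1 - m + x) ^ (p-1) * (1 - m - x) ^ (1-p-1))
          - (1-p) * (p * (1 - m + x) ^ (p-1) * (1 - m - x) ^ (1-p-1)
            - (1-p-1) * (1 - m + x) ^ p * (1 - m - x) ^ (1-p-1-1))))
      - 16 * (p * (1-p)) * 1) := by
    intro x hx
    obtain ⟨h1, h2, h3, h4, h5, h6, h7⟩ := hb x hx
    have hC := claimC p (m + x) (m - x) (1 - m - x) (1 - m + x) hp0 hp1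
      h1 h2 h3 h4 (by ring) (by ring)
    have key : (-(((1-p) * ((1-p-1) * (m + x) ^ (1-p-1-1) * (m - x) ^ p
            - p * (m + x) ^ (1-p-1) * (m - x) ^ (p-1))
          - p * ((1-p) * (m + x) ^ (1-p-1) * (m - x) ^ (p-1)
            - (p-1) * (m + x) ^ (1-p) * (m - x) ^ (p-1-1)))
        + (p * ((p-1) * (1 - m + x) ^ (p-1-1) * (1 - m - x) ^ (1-p)
            - (1-p) * (1 - m + x) ^ (p-1) * (1 - m - x) ^ (1-p-1))
          - (1-p) * (p * (1 - m + x) ^ (p-1) * (1 - m - x) ^ (1-p-1)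
            - (1-p-1) * (1 - m + x) ^ p * (1 - m - x) ^ (1-p-1-1)))))
        = (p * (1-p)) * (((m + x) + (m - x)) ^ 2 * ((m + x) ^ (1-p-2) * (m - x) ^ (p-2))
            + ((1 - m - x) + (1 - m + x)) ^ 2
              * ((1 - m - x) ^ (1-p-2) * (1 - m + x) ^ (p-2))) := by
      rw [show (1-p-1-1 : ℝ) = 1-p-2 by ring, show (p-1-1 : ℝ) = p-2 by ring,
        rpow_shift2 h3 p (p-2) (by ring), rpow_shift1 h3 (p-1) (p-2) (by ring),
        rpow_shift2 h1 (1-p) (1-p-2) (by ring), rpow_shift1 h1 (1-p-1) (1-p-2) (by ring),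
        rpow_shift2 h5 (1-p) (1-p-2) (by ring), rpow_shift1 h5 (1-p-1) (1-p-2) (by ring),
        rpow_shift2 h6 p (p-2) (by ring), rpow_shift1 h6 (p-1) (p-2) (by ring)]
      ring
    rw [key]
    nlinarith [hC, hpq]
  -- V 0 = 0
  have hV0 : V 0 = 0 := by
    rw [hVdef]
    simp only [add_zero, sub_zero, mul_zero]
    have c1 : m ^ (1-p-1:ℝ) * m ^ (p:ℝ) = 1 := by
      rw [← Real.rpow_add hm0, show (1-p-1) + p = 0 by ring, Real.rpow_zero]
    have c2 : m ^ (1-p:ℝ) * m ^ (p-1:ℝ) = 1 := by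
      rw [← Real.rpow_add hm0, show (1-p) + (p-1) = 0 by ring, Real.rpow_zero]
    have hm1' : 0 < 1 - m := by linarith
    have c3 : (1-m) ^ (p-1:ℝ) * (1-m) ^ (1-p:ℝ) = 1 := by
      rw [← Real.rpow_add hm1', show (p-1) + (1-p) = 0 by ring, Real.rpow_zero]
    have c4 : (1-m) ^ (p:ℝ) * (1-m) ^ (1-p-1:ℝ) = 1 := by
      rw [← Real.rpow_add hm1', show p + (1-p-1) = 0 by ring, Real.rpow_zero]
    rw [c1, c2, c3, c4]
    ring
  -- V is monotone on [0, E], hence nonneg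
  have hVcont : ContinuousOn V (Set.Icc 0 E) := fun x hx =>
    ((hVderiv x hx).continuousAt).continuousWithinAt
  have hVmono : MonotoneOn V (Set.Icc 0 E) := by
    apply monotoneOn_of_deriv_nonneg (convex_Icc 0 E) hVcont
    · intro x hx
      rw [interior_Icc] at hx
      exact ((hVderiv x (Set.Ioo_subset_Icc_self hx)).differentiableAt).differentiableWithinAt
    · intro x hx
      rw [interior_Icc] at hx
      rw [(hVderiv x (Set.Ioo_subset_Icc_self hx)).deriv]
      exact hVderiv_nonneg x (Set.Ioo_subset_Icc_self hx)
  have hVnonneg : ∀ x ∈ Set.Icc (0:ℝ) E, 0 ≤ V x := by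
    intro x hx
    have := hVmono (Set.left_mem_Icc.mpr hE0) hx hx.1
    rw [hV0] at this
    exact this
  -- W is monotone on [0, E]
  have hWcont : ContinuousOn W (Set.Icc 0 E) := fun x hx =>
    ((hWderiv x hx).continuousAt).continuousWithinAt
  have hWmono : MonotoneOn W (Set.Icc 0 E) := by
    apply monotoneOn_of_deriv_nonneg (convex_Icc 0 E) hWcont
    · intro x hx
      rw [interior_Icc] at hx
      exact ((hWderiv x (Set.Ioo_subset_Icc_self hx)).differentiableAt).differentiableWithinAt
    · intro x hx
      rw [interior_Icc] at hx
      rw [(hWderiv x (Set.Ioo_subset_Icc_self hx)).deriv]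
      exact hVnonneg x (Set.Ioo_subset_Icc_self hx)
  -- W 0 = 0
  have hW0 : W 0 = 0 := by
    rw [hWdef]
    simp only [add_zero, sub_zero, mul_zero]
    have c1 : m ^ (1-p:ℝ) * m ^ (p:ℝ) = m := by
      rw [← Real.rpow_add hm0, show (1-p) + p = 1 by ring, Real.rpow_one]
    have hm1' : 0 < 1 - m := by linarith
    have c2 : (1-m) ^ (p:ℝ) * (1-m) ^ (1-p:ℝ) = 1 - m := by
      rw [← Real.rpow_add hm1', show p + (1-p) = 1 by ring, Real.rpow_one]
    rw [c1, c2]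
    ring
  -- hence W E ≥ 0, i.e. the clean stability inequality
  have hWE : 0 ≤ W E := by
    have := hWmono (Set.left_mem_Icc.mpr hE0) (Set.right_mem_Icc.mpr hE0) hE0
    rw [hW0] at this
    exact this
  have hA : t ^ (1-p) * a ^ p + (1 - t) ^ (1-p) * (1 - a) ^ p
      ≤ 1 - 2 * (p * (1-p)) * (t - a) ^ 2 := by
    simp only [hWdef] at hWE
    rw [hmE1, hmE2, hmE3, hmE4] at hWE
    have hE2 : 8 * (p * (1-p)) * E ^ 2 = 2 * (p * (1-p)) * (t - a) ^ 2 := by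
      rw [hE]; ring
    rw [hE2] at hWE
    have hcomm : (1-a) ^ (p:ℝ) * (1-t) ^ (1-p:ℝ) = (1-t) ^ (1-p:ℝ) * (1-a) ^ (p:ℝ) :=
      mul_comm _ _
    linarith [hWE, hcomm]
  -- the constant bound : (p+1)^(p+1) ≤ 4 * p^p
  have hB : (p + 1) ^ (p + 1) ≤ 4 * p ^ p := by
    have h1 : (p + 1) ^ (p + 1) = (p + 1) * (p + 1) ^ p := by
      rw [Real.rpow_add (by linarith : (0:ℝ) < p + 1), Real.rpow_one]; ring
    have h2 : (p + 1) ^ p = p ^ p * (1 + 1/p) ^ p := by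
      rw [← Real.mul_rpow hp0.le (by positivity)]
      congr 1
      field_simp
    have h3 : (1 + 1/p) ^ p ≤ 1 + p * (1/p) := by
      have hs : (0:ℝ) ≤ 1/p := by positivity
      exact rpow_one_add_le_one_add_mul_self (by linarith) hp0.le hp1.le
    have h4 : 1 + p * (1/p) = 2 := by
      rw [mul_one_div, div_self hp0.ne']; norm_num
    have h5 : (1 + 1/p) ^ p ≤ 2 := by rw [h4] at h3; exact h3
    have hpp : (0:ℝ) < p ^ p := rpow_pos_of_pos hp0 p
    calc (p + 1) ^ (p + 1) = (p + 1) * ((p + 1) ^ p) := h1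
      _ = (p + 1) * (p ^ p * (1 + 1/p) ^ p) := by rw [h2]
      _ ≤ (p + 1) * (p ^ p * 2) := by
          apply mul_le_mul_of_nonneg_left _ (by linarith)
          exact mul_le_mul_of_nonneg_left h5 hpp.le
      _ ≤ 4 * p ^ p := by nlinarith [hpp]
  -- final assembly
  have hppow : p ^ (p - 1) = p ^ p / p := by
    rw [Real.rpow_sub hp0, Real.rpow_one]
  have hpp : (0:ℝ) < p ^ p := rpow_pos_of_pos hp0 p
  have hc : (p + 1) ^ (p + 1) / (2 * p ^ (p - 1)) ≤ 2 * p := by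
    rw [hppow, div_le_iff₀ (by positivity)]
    calc (p + 1) ^ (p + 1) ≤ 4 * p ^ p := hB
      _ = 2 * p * (2 * (p ^ p / p)) := by field_simp; ring
  have hfrac : (t ^ (1 - p) * a ^ p + (1 - t) ^ (1 - p) * (1 - a) ^ p - 1) / (p - 1)
      = (1 - (t ^ (1 - p) * a ^ p + (1 - t) ^ (1 - p) * (1 - a) ^ p)) / (1 - p) := by
    have h1 : p - 1 ≠ 0 := by linarith
    have h2 : 1 - p ≠ 0 := by linarith
    field_simp
    ring
  rw [ge_iff_le, hfrac]
  have step2 : 2 * p * (t - a) ^ 2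
      ≤ (1 - (t ^ (1 - p) * a ^ p + (1 - t) ^ (1 - p) * (1 - a) ^ p)) / (1 - p) := by
    rw [le_div_iff₀ hq0]
    nlinarith [hA]
  have step1 := mul_le_mul_of_nonneg_right hc (sq_nonneg (t - a))
  linarith
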